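/- Let A be an n×n GUE matrix (standard Gaussian on Hermitian matrices with Hilbert–Schmidt inner product). Then for every integer p ≥ 1: E[tr((n^{-1/2}A)^p)] = (1/n)·Σ_{k=0}^{p−2} E[tr((n^{-1/2}A)^k)·tr((n^{-1/2}A)^{p−2−k})], where the empty sum for p < 2 is 0 (so the expectation vanishes for p = 1). -/

import Mathlib

open Matrix MeasureTheory ProbabilityTheory Real

set_option linter.unusedSectionVars false
set_option maxHeartbeats 1000000


open MeasureTheory ProbabilityTheory Real

noncomputable def gmom (m : ℕ) : ℝ := ∫ x, x ^ m ∂(gaussianReal 0 1)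

lemma gaussianReal_integral_eq (f : ℝ → ℝ) :
    ∫ x, f x ∂(gaussianReal 0 1)
      = ∫ x, gaussianPDFReal 0 1 x * f x := by
  rw [gaussianReal_of_var_ne_zero _ one_ne_zero]
  have hmeas : Measurable fun x => (gaussianPDFReal 0 1 x).toNNReal :=
    (measurable_gaussianPDFReal 0 1).real_toNNReal
  have : gaussianPDF 0 1 = fun x => ((gaussianPDFReal 0 1 x).toNNReal : ENNReal) := by
    funext x; simp [gaussianPDF_def, ENNReal.ofReal]
  rw [this, integral_withDensity_eq_integral_smul hmeas]
  congr 1; funext x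
  simp [NNReal.smul_def, Real.coe_toNNReal _ (gaussianPDFReal_nonneg 0 1 x)]

lemma gaussianReal_integrable_iff (f : ℝ → ℝ) :
    Integrable f (gaussianReal 0 1)
      ↔ Integrable (fun x => gaussianPDFReal 0 1 x * f x) := by
  rw [gaussianReal_of_var_ne_zero _ one_ne_zero]
  have hmeas : Measurable fun x => (gaussianPDFReal 0 1 x).toNNReal :=
    (measurable_gaussianPDFReal 0 1).real_toNNReal
  have : gaussianPDF 0 1 = fun x => ((gaussianPDFReal 0 1 x).toNNReal : ENNReal) := by
    funext x; simp [gaussianPDF_def, ENNReal.ofReal]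
  rw [this, integrable_withDensity_iff_integrable_smul hmeas]
  constructor <;> intro h <;> refine h.congr (Filter.Eventually.of_forall fun x => ?_) <;>
    simp [NNReal.smul_def, Real.coe_toNNReal _ (gaussianPDFReal_nonneg 0 1 x)]

lemma integrable_pow_mul_gexp (k : ℕ) :
    Integrable fun x : ℝ => x ^ k * rexp (-2⁻¹ * x ^ 2) := by
  have := integrable_rpow_mul_exp_neg_mul_sq (b := 2⁻¹) (by norm_num)
    (s := (k : ℝ)) (lt_of_lt_of_le neg_one_lt_zero (Nat.cast_nonneg k))
  simpa [Real.rpow_natCast] using this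

lemma gaussianPDFReal_pow_eq (m : ℕ) (x : ℝ) :
    gaussianPDFReal 0 1 x * x ^ m
      = (Real.sqrt (2 * π))⁻¹ * (x ^ m * rexp (-2⁻¹ * x ^ 2)) := by
  have h : -(x - 0) ^ 2 / (2 * (1:ℝ)) = -2⁻¹ * x ^ 2 := by ring
  rw [gaussianPDFReal]
  push_cast
  rw [h]; ring

lemma gmom_integrable (m : ℕ) :
    Integrable (fun x => x ^ m) (gaussianReal 0 1) := by
  rw [gaussianReal_integrable_iff]
  refine Integrable.congr (((integrable_pow_mul_gexp m).const_mul
    ((Real.sqrt (2 * π))⁻¹))) (Filter.Eventually.of_forall fun x => ?_)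
  exact (gaussianPDFReal_pow_eq m x).symm

lemma gexp_integral_one : gmom 0 = 1 := by
  simp [gmom]

lemma gI_rec (m : ℕ) :
    ∫ x : ℝ, x ^ (m + 2) * rexp (-2⁻¹ * x ^ 2)
      = (m + 1) * ∫ x : ℝ, x ^ m * rexp (-2⁻¹ * x ^ 2) := by
  set f : ℝ → ℝ := fun x => -(x ^ (m+1) * rexp (-2⁻¹ * x ^ 2)) with hf
  set f' : ℝ → ℝ := fun x => x ^ (m+2) * rexp (-2⁻¹ * x ^ 2)
    - (m+1) * (x ^ m * rexp (-2⁻¹ * x ^ 2)) with hf'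
  have hderiv : ∀ x, HasDerivAt f (f' x) x := by
    intro x
    have h1 : HasDerivAt (fun x : ℝ => x ^ (m+1)) ((m+1) * x ^ m) x := by
      simpa using hasDerivAt_pow (m+1) x
    have h2 : HasDerivAt (fun x : ℝ => rexp (-2⁻¹ * x ^ 2))
        (rexp (-2⁻¹ * x ^ 2) * (-2⁻¹ * (2 * x))) x := by
      exact (((hasDerivAt_pow 2 x).const_mul (-2⁻¹)).exp).congr_deriv (by ring)
    have := ((h1.mul h2).neg)
    refine this.congr_deriv ?_
    simp only [hf']
    push_cast
    ring
  have hint' : Integrable f' :=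
    (integrable_pow_mul_gexp (m+2)).sub ((integrable_pow_mul_gexp m).const_mul _)
  have hint : Integrable f := ((integrable_pow_mul_gexp (m+1)).neg)
  have h0 := integral_eq_zero_of_hasDerivAt_of_integrable hderiv hint' hint
  rw [hf'] at h0
  rw [integral_sub (integrable_pow_mul_gexp (m+2))
    ((integrable_pow_mul_gexp m).const_mul _)] at h0
  rw [integral_const_mul] at h0
  linarith

lemma gI_one : ∫ x : ℝ, x ^ 1 * rexp (-2⁻¹ * x ^ 2) = 0 := by
  set f : ℝ → ℝ := fun x => -rexp (-2⁻¹ * x ^ 2) with hf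
  have hderiv : ∀ x, HasDerivAt f (x ^ 1 * rexp (-2⁻¹ * x ^ 2)) x := by
    intro x
    have h2 : HasDerivAt (fun x : ℝ => rexp (-2⁻¹ * x ^ 2))
        (rexp (-2⁻¹ * x ^ 2) * (-2⁻¹ * (2 * x))) x :=
      (((hasDerivAt_pow 2 x).const_mul (-2⁻¹)).exp).congr_deriv (by ring)
    exact h2.neg.congr_deriv (by ring)
  exact integral_eq_zero_of_hasDerivAt_of_integrable hderiv
    (integrable_pow_mul_gexp 1) ((integrable_pow_mul_gexp 0).congr
      (Filter.Eventually.of_forall fun x => by simp)).neg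

lemma gmom_eq (m : ℕ) :
    gmom m = (Real.sqrt (2 * π))⁻¹ * ∫ x : ℝ, x ^ m * rexp (-2⁻¹ * x ^ 2) := by
  rw [gmom, gaussianReal_integral_eq]
  simp_rw [gaussianPDFReal_pow_eq]
  rw [integral_const_mul]

lemma gmom_one : gmom 1 = 0 := by rw [gmom_eq, gI_one]; simp

lemma gmom_rec (m : ℕ) : gmom (m + 2) = (m + 1) * gmom m := by
  rw [gmom_eq, gmom_eq, gI_rec]; ring

lemma gmom_succ (a : ℕ) : gmom (a + 1) = a * gmom (a - 1) := by
  match a with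
  | 0 => simpa using gmom_one
  | (b+1) => simpa using gmom_rec b

lemma gmom_def (m : ℕ) : gmom m = ∫ x, x ^ m ∂(gaussianReal 0 1) := rfl


open MeasureTheory ProbabilityTheory Real


section
variable {Ω : Type*} [MeasureSpace Ω] [IsProbabilityMeasure (ℙ : Measure Ω)]
  {ι : Type} [Fintype ι] [DecidableEq ι]

lemma indep_integral_prod {h : ι → Ω → ℝ}
    (hind : iIndepFun h ℙ)
    (hm : ∀ i, Measurable (h i)) (hi : ∀ i, Integrable (h i) ℙ)
    (s : Finset ι) :
    Integrable (fun ω => ∏ i ∈ s, h i ω) ℙ ∧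
      ∫ ω, ∏ i ∈ s, h i ω ∂ℙ = ∏ i ∈ s, ∫ ω, h i ω ∂ℙ := by
  classical
  induction s using Finset.induction with
  | empty => simp
  | @insert a s ha ih =>
    have hIndep : IndepFun (∏ i ∈ s, h i) (h a) ℙ :=
      iIndepFun.indepFun_finset_prod_of_notMem hind hm ha
    have hps : (fun ω => ∏ i ∈ s, h i ω) = ∏ i ∈ s, h i := by
      funext ω; simp
    have hint : Integrable ((∏ i ∈ s, h i) * h a) ℙ :=
      hIndep.integrable_mul (hps ▸ ih.1) (hi a)
    constructor
    · refine hint.congr (Filter.Eventually.of_forall fun ω => ?_)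
      simp [Finset.prod_insert ha, mul_comm]
    · rw [show (fun ω => ∏ i ∈ insert a s, h i ω)
        = (∏ i ∈ s, h i) * h a by funext ω; simp [Finset.prod_insert ha, mul_comm]]
      rw [hIndep.integral_mul_eq_mul_integral (hps ▸ ih.1).aestronglyMeasurable (hi a).aestronglyMeasurable]
      rw [Finset.prod_insert ha, ← hps, ih.2]
      exact mul_comm _ _

variable {g : ι → Ω → ℝ} (hmeas : ∀ i, Measurable (g i))
  (hind : iIndepFun g ℙ)
  (hmap : ∀ i, Measure.map (g i) ℙ = gaussianReal 0 1)

include hmeas hind hmap in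
lemma gauss_prod_pow (c : ι → ℕ) :
    Integrable (fun ω => ∏ i, (g i ω) ^ (c i)) ℙ ∧
      ∫ ω, ∏ i, (g i ω) ^ (c i) ∂ℙ = ∏ i, gmom (c i) := by
  have hm : ∀ i, Measurable (fun ω => (g i ω) ^ (c i)) :=
    fun i => (hmeas i).pow_const _
  have hi : ∀ i, Integrable (fun ω => (g i ω) ^ (c i)) ℙ := by
    intro i
    have : Integrable (fun x : ℝ => x ^ (c i)) (Measure.map (g i) ℙ) := by
      rw [hmap i]; exact gmom_integrable _
    exact (integrable_map_measure
      (measurable_id.pow_const _).aestronglyMeasurable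
      (hmeas i).aemeasurable).mp this
  have hintegral : ∀ i, ∫ ω, (g i ω) ^ (c i) ∂ℙ = gmom (c i) := by
    intro i
    rw [gmom_def, ← hmap i, integral_map (hmeas i).aemeasurable]
    exact (measurable_id.pow_const _).aestronglyMeasurable
  have hindh : iIndepFun (fun i ω => (g i ω) ^ (c i)) ℙ := by
    exact hind.comp (fun i x => x ^ (c i)) (fun i => measurable_id.pow_const _)
  obtain ⟨h1, h2⟩ := indep_integral_prod hindh hm hi Finset.univ
  exact ⟨h1, h2.trans (by simp [hintegral])⟩

end


open Matrix

section
variable {n : ℕ} {ι : Type} [Fintype ι] [DecidableEq ι]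
  {H : ι → Matrix (Fin n) (Fin n) ℂ}
  (horth : ∀ i j, (H i * H j).trace = if i = j then (1 : ℂ) else 0)
  (hspan : ∀ M : Matrix (Fin n) (Fin n) ℂ, M.IsHermitian →
      M ∈ Submodule.span ℝ (Set.range H))

include horth hspan in
lemma key_expand (X : Matrix (Fin n) (Fin n) ℂ) (hX : X.IsHermitian) (a b : Fin n) :
    ∑ i, (H i * X).trace * H i a b = X a b := by
  obtain ⟨co, hco⟩ := (Submodule.mem_span_range_iff_exists_fun ℝ).1 (hspan X hX)
  have hcoef : ∀ j, (H j * X).trace = (co j : ℂ) := by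
    intro j
    rw [← hco]
    rw [Matrix.mul_sum]
    simp only [Matrix.mul_smul, Matrix.trace_sum, Matrix.trace_smul, horth]
    simp
  calc ∑ i, (H i * X).trace * H i a b = ∑ i, ((co i : ℂ)) * H i a b := by
        exact Finset.sum_congr rfl fun i _ => by rw [hcoef]
    _ = X a b := by
        rw [← hco]
        simp [Matrix.sum_apply, Matrix.smul_apply, Complex.real_smul]

lemma htr_std (M : Matrix (Fin n) (Fin n) ℂ) (c d : Fin n) :
    (M * single c d (1:ℂ)).trace = M d c := by
  simp [Matrix.trace, Matrix.diag, Matrix.mul_apply, Matrix.single, Matrix.of_apply,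
    ite_and, mul_ite, Finset.sum_ite_eq, Finset.sum_ite_eq']

include horth hspan in
lemma magic_entry (a b c d : Fin n) :
    ∑ i, H i a b * H i c d
      = (if a = d then (1:ℂ) else 0) * (if b = c then (1:ℂ) else 0) := by
  classical
  set E1 : Matrix (Fin n) (Fin n) ℂ := single b a 1 with hE1
  set E2 : Matrix (Fin n) (Fin n) ℂ := single a b 1 with hE2
  have stdconj : ∀ x y : Fin n, (single x y (1:ℂ))ᴴ = single y x 1 := by
    intro x y
    ext u v
    by_cases h1 : x = v <;> by_cases h2 : y = u <;>
      simp [Matrix.conjTranspose_apply, Matrix.single, Matrix.of_apply, *]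
  have hherm1 : (E1 + E2).IsHermitian := by
    rw [Matrix.IsHermitian, conjTranspose_add, hE1, hE2, stdconj, stdconj]
    exact add_comm _ _
  have hherm2 : (Complex.I • (E1 - E2)).IsHermitian := by
    rw [Matrix.IsHermitian, conjTranspose_smul, conjTranspose_sub, hE1, hE2, stdconj, stdconj,
      Complex.star_def, Complex.conj_I]
    module
  have h1 := key_expand horth hspan _ hherm1 c d
  have h2 := key_expand horth hspan _ hherm2 c d
  have htr1 : ∀ i, (H i * (E1 + E2)).trace = H i a b + H i b a := by
    intro i; rw [Matrix.mul_add, Matrix.trace_add, hE1, hE2, htr_std, htr_std]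
  have htr2 : ∀ i, (H i * (Complex.I • (E1 - E2))).trace
      = Complex.I * (H i a b - H i b a) := by
    intro i
    rw [Matrix.mul_smul, Matrix.trace_smul, Matrix.mul_sub, Matrix.trace_sub,
      hE1, hE2, htr_std, htr_std]
    simp
  simp only [htr1] at h1
  simp only [htr2] at h2
  have h1' : (∑ i, H i a b * H i c d) + (∑ i, H i b a * H i c d) = (E1 + E2) c d := by
    rw [← h1, ← Finset.sum_add_distrib]
    exact Finset.sum_congr rfl fun i _ => by ring
  have h2' : (∑ i, H i a b * H i c d) - (∑ i, H i b a * H i c d) = (E1 - E2) c d := by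
    have : ∑ i, Complex.I * (H i a b - H i b a) * H i c d
        = Complex.I * ((∑ i, H i a b * H i c d) - (∑ i, H i b a * H i c d)) := by
      rw [← Finset.sum_sub_distrib, Finset.mul_sum]
      exact Finset.sum_congr rfl fun i _ => by ring
    rw [this] at h2
    have h2'' : ((Complex.I • (E1 - E2)) : Matrix (Fin n) (Fin n) ℂ) c d
        = Complex.I * ((E1 - E2) c d) := by simp
    rw [h2''] at h2
    exact mul_left_cancel₀ Complex.I_ne_zero h2
  have hfin : (2:ℂ) * ∑ i, H i a b * H i c d = (E1 + E2) c d + (E1 - E2) c d := by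
    rw [← h1', ← h2']; ring
  have hE : (E1 + E2) c d + (E1 - E2) c d = 2 * (E1 c d) := by
    simp [Matrix.add_apply, Matrix.sub_apply]; ring
  rw [hE] at hfin
  have := mul_left_cancel₀ (two_ne_zero (α := ℂ)) hfin
  rw [this, hE1]
  simp [Matrix.single, Matrix.of_apply, ite_and]

include horth hspan in
lemma magic_matrix (B : Matrix (Fin n) (Fin n) ℂ) :
    ∑ i, H i * B * H i = B.trace • (1 : Matrix (Fin n) (Fin n) ℂ) := by
  ext a d
  rw [Matrix.sum_apply]
  have step : ∀ i, (H i * B * H i) a d = ∑ c, ∑ b, (H i a b * B b c) * H i c d := by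
    intro i
    rw [Matrix.mul_apply]
    exact Finset.sum_congr rfl fun c _ => by rw [Matrix.mul_apply, Finset.sum_mul]
  simp only [step]
  rw [Finset.sum_comm]
  have step2 : ∀ c, ∑ i, ∑ b, (H i a b * B b c) * H i c d
      = ∑ b, B b c * ∑ i, H i a b * H i c d := by
    intro c
    rw [Finset.sum_comm]
    exact Finset.sum_congr rfl fun b _ => by
      rw [Finset.mul_sum]; exact Finset.sum_congr rfl fun i _ => by ring
  simp only [step2, magic_entry horth hspan]
  simp only [mul_ite, mul_one, mul_zero, ite_and]
  rw [Finset.sum_comm]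
  simp [Finset.sum_ite_eq', Matrix.smul_apply, Matrix.one_apply, Matrix.trace, Matrix.diag,
    smul_eq_mul]

include horth hspan in
lemma magic_trace (B C : Matrix (Fin n) (Fin n) ℂ) :
    ∑ i, (H i * B * (H i * C)).trace = B.trace * C.trace := by
  have : ∀ i, (H i * B * (H i * C)) = (H i * B * H i) * C := by
    intro i; exact (Matrix.mul_assoc _ _ _).symm
  simp only [this]
  rw [← Matrix.trace_sum, ← Finset.sum_mul, magic_matrix horth hspan]
  rw [Matrix.smul_mul, Matrix.one_mul, Matrix.trace_smul, smul_eq_mul]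

end


open Matrix

section Core
variable {ι : Type} [Fintype ι] [DecidableEq ι] {n : ℕ}

def cnt {m : ℕ} (f : Fin m → ι) (i : ι) : ℕ := ∑ j, if f j = i then 1 else 0

variable (H : ι → Matrix (Fin n) (Fin n) ℂ) (μ : ℕ → ℝ)

noncomputable def wrd {m : ℕ} (f : Fin m → ι) : Matrix (Fin n) (Fin n) ℂ :=
  (List.ofFn fun j => H (f j)).prod

noncomputable def red {m : ℕ} (t : Fin m → ι) (j : Fin m) : ℝ :=
  ∏ i, μ (cnt t i - if t j = i then 1 else 0)

lemma cnt_cons {m : ℕ} (i0 : ι) (t : Fin m → ι) (i : ι) :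
    cnt (Fin.cons i0 t) i = (if i0 = i then 1 else 0) + cnt t i := by
  rw [cnt, Fin.sum_univ_succ, cnt]
  simp only [Fin.cons_zero, Fin.cons_succ]

lemma cnt_append {a b : ℕ} (u : Fin a → ι) (v : Fin b → ι) (i : ι) :
    cnt (Fin.append u v) i = cnt u i + cnt v i := by
  rw [cnt, Fin.sum_univ_add, cnt, cnt]
  simp only [Fin.append_left, Fin.append_right]

lemma cnt_cast {m m' : ℕ} (h : m' = m) (w : Fin m' → ι) (i : ι) :
    cnt (w ∘ Fin.cast h.symm) i = cnt w i := by
  subst h; rfl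

lemma comp_append' {κ : Type*} (g : ι → κ) {a b : ℕ} (u : Fin a → ι) (v : Fin b → ι) :
    (fun l => g (Fin.append u v l)) = Fin.append (fun x => g (u x)) (fun x => g (v x)) := by
  funext l
  cases l using Fin.addCases with
  | left i => simp
  | right i => simp

lemma wrd_cons {m : ℕ} (i0 : ι) (t : Fin m → ι) :
    wrd H (Fin.cons i0 t) = H i0 * wrd H t := by
  simp [wrd, List.ofFn_succ]

lemma wrd_append {a b : ℕ} (u : Fin a → ι) (v : Fin b → ι) :
    wrd H (Fin.append u v) = wrd H u * wrd H v := by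
  rw [wrd, comp_append' (fun i => H i) u v, List.ofFn_fin_append, List.prod_append]
  rfl

lemma wrd_cast {m m' : ℕ} (h : m' = m) (w : Fin m' → ι) :
    wrd H (w ∘ Fin.cast h.symm) = wrd H w := by
  subst h; rfl

lemma sum_pow_expand {R : Type*} [Ring R] (x : ι → R) (m : ℕ) :
    (∑ i, x i) ^ m = ∑ f : Fin m → ι, (List.ofFn fun j => x (f j)).prod := by
  induction m with
  | zero => simp
  | succ m ih =>
    rw [pow_succ', ih, Finset.sum_mul]
    rw [← Equiv.sum_comp (Fin.consEquiv (fun _ : Fin (m+1) => ι))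
      (fun f => (List.ofFn fun j => x (f j)).prod)]
    rw [Fintype.sum_prod_type]
    refine Finset.sum_congr rfl fun i _ => ?_
    rw [Finset.mul_sum]
    refine Finset.sum_congr rfl fun t _ => ?_
    have hc : (Fin.consEquiv fun _ : Fin (m+1) => ι) (i, t) = Fin.cons i t := rfl
    rw [hc]
    rw [List.ofFn_succ]
    simp

lemma ofFn_smul_prod {R : Type*} [Ring R] [Algebra ℝ R] {m : ℕ}
    (a : Fin m → ℝ) (M : Fin m → R) :
    (List.ofFn fun j => a j • M j).prod = (∏ j, a j) • (List.ofFn M).prod := by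
  induction m with
  | zero => simp
  | succ m ih =>
    rw [List.ofFn_succ, List.prod_cons, ih (fun j => a j.succ) (fun j => M j.succ),
      Fin.prod_univ_succ, List.ofFn_succ, List.prod_cons, smul_mul_smul_comm]

lemma wick (hμs : ∀ a : ℕ, μ (a + 1) = a * μ (a - 1)) {m : ℕ} (i0 : ι) (t : Fin m → ι) :
    (∏ i, μ (cnt (Fin.cons i0 t) i)) = ∑ j, if t j = i0 then red μ t j else 0 := by
  classical
  set P : ℝ := ∏ i ∈ Finset.univ.erase i0, μ (cnt t i) with hP
  have key : ∀ j, t j = i0 → red μ t j = μ (cnt t i0 - 1) * P := by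
    intro j hj
    rw [red, ← Finset.mul_prod_erase Finset.univ _ (Finset.mem_univ i0)]
    congr 1
    · rw [hj]; simp
    · refine Finset.prod_congr rfl fun i hi => ?_
      rw [hj, if_neg (Finset.ne_of_mem_erase hi).symm, Nat.sub_zero]
  have hcard : ((cnt t i0 : ℕ) : ℝ) = ∑ j, if t j = i0 then (1:ℝ) else 0 := by
    rw [cnt]; push_cast
    exact Finset.sum_congr rfl fun j _ => by split_ifs <;> simp
  calc ∏ i, μ (cnt (Fin.cons i0 t) i)
      = μ (cnt t i0 + 1) * P := by
        rw [← Finset.mul_prod_erase Finset.univ _ (Finset.mem_univ i0)]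
        congr 1
        · rw [cnt_cons]; simp [add_comm]
        · refine Finset.prod_congr rfl fun i hi => ?_
          rw [cnt_cons, if_neg ((Finset.ne_of_mem_erase hi).symm), zero_add]
    _ = (cnt t i0 : ℝ) * (μ (cnt t i0 - 1) * P) := by rw [hμs]; ring
    _ = ∑ j, if t j = i0 then red μ t j else 0 := by
        rw [hcard, Finset.sum_mul]
        refine Finset.sum_congr rfl fun j _ => ?_
        by_cases hj : t j = i0
        · rw [if_pos hj, if_pos hj, key j hj, one_mul]
        · rw [if_neg hj, if_neg hj, zero_mul]

lemma split_sum {M : Type*} [AddCommMonoid M] {a b q : ℕ} (hq : q = a + (b + 1)) (F : (Fin q → ι) → M) :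
    ∑ t : Fin q → ι, F t
      = ∑ u : Fin a → ι, ∑ i1 : ι, ∑ v : Fin b → ι,
          F ((Fin.append u (Fin.cons i1 v)) ∘ Fin.cast hq) := by
  classical
  let E : ((Fin a → ι) × ι × (Fin b → ι)) ≃ (Fin q → ι) :=
    ((Equiv.refl (Fin a → ι)).prodCongr (Fin.consEquiv fun _ : Fin (b+1) => ι)).trans
      ((Fin.appendEquiv a (b+1)).trans (Equiv.arrowCongr (finCongr hq.symm) (Equiv.refl ι)))
  rw [← Equiv.sum_comp E F, Fintype.sum_prod_type]
  refine Finset.sum_congr rfl fun u _ => ?_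
  rw [Fintype.sum_prod_type]
  refine Finset.sum_congr rfl fun i1 _ => Finset.sum_congr rfl fun v _ => ?_
  congr 1

lemma glue_at {b q : ℕ} (j : Fin q) (hq : q = (j : ℕ) + (b + 1))
    (u : Fin (j : ℕ) → ι) (i1 : ι) (v : Fin b → ι) :
    ((Fin.append u (Fin.cons i1 v)) ∘ Fin.cast hq) j = i1 := by
  have hcast : Fin.cast hq j = Fin.natAdd (j : ℕ) (0 : Fin (b+1)) := by
    ext; simp
  rw [Function.comp_apply, hcast, Fin.append_right, Fin.cons_zero]

lemma cnt_glue {b q : ℕ} (j : Fin q) (hq : q = (j : ℕ) + (b + 1))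
    (u : Fin (j : ℕ) → ι) (i1 : ι) (v : Fin b → ι) (i : ι) :
    cnt ((Fin.append u (Fin.cons i1 v)) ∘ Fin.cast hq) i
      = cnt u i + ((if i1 = i then 1 else 0) + cnt v i) := by
  rw [show Fin.cast hq = Fin.cast hq.symm.symm from rfl, cnt_cast hq.symm, cnt_append, cnt_cons]

lemma red_glue {b q : ℕ} (j : Fin q) (hq : q = (j : ℕ) + (b + 1))
    (u : Fin (j : ℕ) → ι) (i1 : ι) (v : Fin b → ι) :
    red μ ((Fin.append u (Fin.cons i1 v)) ∘ Fin.cast hq) j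
      = ∏ i, μ (cnt u i + cnt v i) := by
  rw [red]
  refine Finset.prod_congr rfl fun i _ => ?_
  rw [glue_at j hq, cnt_glue j hq]
  congr 1
  split_ifs <;> omega

lemma wrd_glue {b q : ℕ} (j : Fin q) (hq : q = (j : ℕ) + (b + 1))
    (u : Fin (j : ℕ) → ι) (i1 : ι) (v : Fin b → ι) :
    wrd H ((Fin.append u (Fin.cons i1 v)) ∘ Fin.cast hq)
      = wrd H u * (H i1 * wrd H v) := by
  rw [show Fin.cast hq = Fin.cast hq.symm.symm from rfl, wrd_cast H hq.symm, wrd_append,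
    wrd_cons]

theorem core_identity (hμs : ∀ a : ℕ, μ (a + 1) = a * μ (a - 1))
    (hmagic : ∀ B C : Matrix (Fin n) (Fin n) ℂ,
      ∑ i, (H i * B * (H i * C)).trace = B.trace * C.trace) (q : ℕ) :
    ∑ f : Fin (q+1) → ι, (∏ i, μ (cnt f i)) • (wrd H f).trace
      = ∑ k ∈ Finset.range q, ∑ u : Fin k → ι, ∑ v : Fin (q-1-k) → ι,
          (∏ i, μ (cnt u i + cnt v i)) • ((wrd H u).trace * (wrd H v).trace) := by
  classical
  rw [← Equiv.sum_comp (Fin.consEquiv fun _ : Fin (q+1) => ι)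
    (fun f => (∏ i, μ (cnt f i)) • (wrd H f).trace), Fintype.sum_prod_type]
  have hc : ∀ (i0 : ι) (t : Fin q → ι),
      (Fin.consEquiv fun _ : Fin (q+1) => ι) (i0, t) = Fin.cons i0 t := fun _ _ => rfl
  simp only [hc]
  have step1 : ∀ (i0 : ι) (t : Fin q → ι),
      (∏ i, μ (cnt (Fin.cons i0 t) i)) • (wrd H (Fin.cons i0 t)).trace
        = ∑ j, if t j = i0 then red μ t j • (H i0 * wrd H t).trace else 0 := by
    intro i0 t
    rw [wick μ hμs, wrd_cons, Finset.sum_smul]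
    exact Finset.sum_congr rfl fun j _ => by rw [ite_smul, zero_smul]
  simp only [step1]
  rw [Finset.sum_comm]
  have step2 : ∀ t : Fin q → ι,
      ∑ i0, ∑ j, (if t j = i0 then red μ t j • (H i0 * wrd H t).trace else 0)
        = ∑ j, red μ t j • (H (t j) * wrd H t).trace := by
    intro t
    rw [Finset.sum_comm]
    refine Finset.sum_congr rfl fun j _ => ?_
    rw [Finset.sum_ite_eq Finset.univ (t j) (fun i0 => red μ t j • (H i0 * wrd H t).trace)]
    simp
  simp only [step2]
  rw [Finset.sum_comm]
  have step3 : ∀ j : Fin q,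
      ∑ t : Fin q → ι, red μ t j • (H (t j) * wrd H t).trace
        = ∑ u : Fin (j:ℕ) → ι, ∑ v : Fin (q-1-(j:ℕ)) → ι,
            (∏ i, μ (cnt u i + cnt v i)) • ((wrd H u).trace * (wrd H v).trace) := by
    intro j
    have hq : q = (j : ℕ) + ((q - 1 - (j : ℕ)) + 1) := by
      have := j.isLt; omega
    rw [split_sum hq (fun t => red μ t j • (H (t j) * wrd H t).trace)]
    refine Finset.sum_congr rfl fun u _ => ?_
    rw [Finset.sum_comm]
    refine Finset.sum_congr rfl fun v _ => ?_
    have hterm : ∀ i1 : ι,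
        red μ ((Fin.append u (Fin.cons i1 v)) ∘ Fin.cast hq) j
            • (H (((Fin.append u (Fin.cons i1 v)) ∘ Fin.cast hq) j)
                * wrd H ((Fin.append u (Fin.cons i1 v)) ∘ Fin.cast hq)).trace
          = (∏ i, μ (cnt u i + cnt v i))
              • (H i1 * wrd H u * (H i1 * wrd H v)).trace := by
      intro i1
      rw [red_glue μ j hq, glue_at j hq, wrd_glue H j hq, ← Matrix.mul_assoc]
    simp only [hterm]
    rw [← Finset.smul_sum, hmagic]
  simp only [step3]
  rw [← Fin.sum_univ_eq_sum_range (fun k => ∑ u : Fin k → ι, ∑ v : Fin (q-1-k) → ι,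
    (∏ i, μ (cnt u i + cnt v i)) • ((wrd H u).trace * (wrd H v).trace)) q]

end Core


section MainAux
variable {Ω : Type*} [MeasureSpace Ω] [IsProbabilityMeasure (ℙ : Measure Ω)]
  {ι : Type} [Fintype ι] [DecidableEq ι] {n : ℕ}
  {g : ι → Ω → ℝ} {H : ι → Matrix (Fin n) (Fin n) ℂ}
  (hgmeas : ∀ i, Measurable (g i))
  (hgind : iIndepFun g ℙ)
  (hgmap : ∀ i, Measure.map (g i) ℙ = gaussianReal 0 1)

lemma prod_comp_cnt {m : ℕ} (f : Fin m → ι) (x : ι → ℝ) :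
    ∏ j, x (f j) = ∏ i, (x i) ^ (cnt f i) := by
  classical
  rw [← Finset.prod_fiberwise_of_maps_to (fun j _ => Finset.mem_univ (f j)) (fun j => x (f j))]
  refine Finset.prod_congr rfl fun i _ => ?_
  rw [show cnt f i = (Finset.univ.filter fun j => f j = i).card from by
    rw [cnt, Finset.card_filter]]
  calc ∏ j ∈ Finset.univ.filter fun j => f j = i, x (f j)
      = ∏ j ∈ Finset.univ.filter fun j => f j = i, x i :=
        Finset.prod_congr rfl fun j hj => by rw [(Finset.mem_filter.1 hj).2]
    _ = x i ^ (Finset.univ.filter fun j => f j = i).card := Finset.prod_const _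

lemma trace_pow_eq (ω : Ω) (m : ℕ) :
    ((∑ i, g i ω • H i) ^ m).trace
      = ∑ f : Fin m → ι, (∏ i, (g i ω) ^ (cnt f i)) • (wrd H f).trace := by
  rw [sum_pow_expand, trace_sum]
  refine Finset.sum_congr rfl fun f _ => ?_
  have hsm : (List.ofFn fun j => g (f j) ω • H (f j)).prod
      = (∏ j, g (f j) ω) • wrd H f :=
    ofFn_smul_prod (fun j => g (f j) ω) (fun j => H (f j))
  rw [hsm, trace_smul, prod_comp_cnt f (fun i => g i ω)]

include hgmeas hgind hgmap in
lemma integral_trace_pow (m : ℕ) :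
    ∫ ω, ((∑ i, g i ω • H i) ^ m).trace
      = ∑ f : Fin m → ι, (∏ i, gmom (cnt f i)) • (wrd H f).trace := by
  calc ∫ ω, ((∑ i, g i ω • H i) ^ m).trace
      = ∫ ω, ∑ f : Fin m → ι, (∏ i, (g i ω) ^ (cnt f i)) • (wrd H f).trace := by
        congr 1; funext ω; exact trace_pow_eq ω m
    _ = ∑ f : Fin m → ι, ∫ ω, (∏ i, (g i ω) ^ (cnt f i)) • (wrd H f).trace := by
        refine integral_finset_sum _ fun f _ => ?_
        exact ((gauss_prod_pow hgmeas hgind hgmap (cnt f)).1).smul_const _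
    _ = _ := by
        refine Finset.sum_congr rfl fun f _ => ?_
        rw [integral_smul_const, (gauss_prod_pow hgmeas hgind hgmap (cnt f)).2]

include hgmeas hgind hgmap in
lemma integral_trace_pow_mul (k m : ℕ) :
    ∫ ω, ((∑ i, g i ω • H i) ^ k).trace * ((∑ i, g i ω • H i) ^ m).trace
      = ∑ u : Fin k → ι, ∑ v : Fin m → ι,
          (∏ i, gmom (cnt u i + cnt v i)) • ((wrd H u).trace * (wrd H v).trace) := by
  have hpt : ∀ ω : Ω, ((∑ i, g i ω • H i) ^ k).trace * ((∑ i, g i ω • H i) ^ m).trace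
      = ∑ u : Fin k → ι, ∑ v : Fin m → ι,
          (∏ i, (g i ω) ^ (cnt u i + cnt v i)) • ((wrd H u).trace * (wrd H v).trace) := by
    intro ω
    rw [trace_pow_eq ω k, trace_pow_eq ω m, Finset.sum_mul_sum]
    refine Finset.sum_congr rfl fun u _ => Finset.sum_congr rfl fun v _ => ?_
    rw [smul_mul_smul_comm]
    congr 1
    rw [← Finset.prod_mul_distrib]
    exact Finset.prod_congr rfl fun i _ => (pow_add _ _ _).symm
  calc ∫ ω, ((∑ i, g i ω • H i) ^ k).trace * ((∑ i, g i ω • H i) ^ m).trace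
      = ∫ ω, ∑ u : Fin k → ι, ∑ v : Fin m → ι,
          (∏ i, (g i ω) ^ (cnt u i + cnt v i)) • ((wrd H u).trace * (wrd H v).trace) := by
        congr 1; funext ω; exact hpt ω
    _ = ∑ u : Fin k → ι, ∫ ω, ∑ v : Fin m → ι,
          (∏ i, (g i ω) ^ (cnt u i + cnt v i)) • ((wrd H u).trace * (wrd H v).trace) := by
        refine integral_finset_sum _ fun u _ => ?_
        exact integrable_finset_sum _ fun v _ =>
          ((gauss_prod_pow hgmeas hgind hgmap (fun i => cnt u i + cnt v i)).1).smul_const _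
    _ = _ := by
        refine Finset.sum_congr rfl fun u _ => ?_
        rw [integral_finset_sum _ fun v _ =>
          ((gauss_prod_pow hgmeas hgind hgmap (fun i => cnt u i + cnt v i)).1).smul_const _]
        refine Finset.sum_congr rfl fun v _ => ?_
        rw [integral_smul_const, (gauss_prod_pow hgmeas hgind hgmap
          (fun i => cnt u i + cnt v i)).2]

end MainAux

/-- `A` is an `n × n` GUE matrix: a random Hermitian matrix distributed according to the
standard Gaussian measure on `M_n^{sa}(ℂ)` with inner product `⟨A,B⟩ = tr(AB)`,
i.e. `A = Σ_i g_i • H_i` for i.i.d. standard Gaussians `g_i` and an orthonormal basis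
`(H_i)` of the real vector space of Hermitian matrices. -/
def IsGUE {n : ℕ} {Ω : Type*} [MeasureSpace Ω]
    (A : Ω → Matrix (Fin n) (Fin n) ℂ) : Prop :=
  ∃ (ι : Type) (_ : Fintype ι) (_ : DecidableEq ι) (g : ι → Ω → ℝ) (H : ι → Matrix (Fin n) (Fin n) ℂ),
    (∀ i, (H i).IsHermitian) ∧
    (∀ i j, (H i * H j).trace = if i = j then (1 : ℂ) else 0) ∧
    (∀ M : Matrix (Fin n) (Fin n) ℂ, M.IsHermitian →
      M ∈ Submodule.span ℝ (Set.range H)) ∧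
    (∀ i, Measurable (g i)) ∧
    iIndepFun g ℙ ∧
    (∀ i, Measure.map (g i) ℙ = gaussianReal 0 1) ∧
    (∀ ω, A ω = ∑ i, g i ω • H i)

/-- Recursion for the moments of a GUE matrix: for `p ≥ 1`,
`E[tr((n^{-1/2}A)^p)] = (1/n) Σ_{k=0}^{p-2} E[tr((n^{-1/2}A)^k) tr((n^{-1/2}A)^{p-2-k})]`,
where the empty sum for `p < 2` is `0`. -/
theorem gue_trace_moment_recursion (n : ℕ) (hn : 0 < n) {Ω : Type*} [MeasureSpace Ω]
    [IsProbabilityMeasure (ℙ : Measure Ω)] (A : Ω → Matrix (Fin n) (Fin n) ℂ)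
    (hA : IsGUE A) (p : ℕ) (hp : 1 ≤ p) :
    ∫ ω, (((Real.sqrt n)⁻¹ • A ω) ^ p).trace
      = (1 / (n : ℂ)) * ∑ k ∈ Finset.range (p - 1),
          ∫ ω, (((Real.sqrt n)⁻¹ • A ω) ^ k).trace *
            (((Real.sqrt n)⁻¹ • A ω) ^ (p - 2 - k)).trace := by
  classical
  obtain ⟨q, rfl⟩ : ∃ q, p = q + 1 := ⟨p - 1, by omega⟩
  obtain ⟨ι, _, _, g, H, hherm, horth, hspan, hgmeas, hgind, hgmap, hAeq⟩ := hA
  have hmagic := magic_trace horth hspan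
  set c : ℝ := (Real.sqrt n)⁻¹ with hc
  have hq1 : q + 1 - 1 = q := rfl
  have hq2 : ∀ k : ℕ, q + 1 - 2 - k = q - 1 - k := fun k => by omega
  have hc2 : c ^ 2 = (1 / n : ℝ) := by
    rw [hc, inv_pow, sq_sqrt (by positivity : (0:ℝ) ≤ (n:ℕ))]
    simp
  have hsc : ∀ (m : ℕ) (ω : Ω), ((c • A ω) ^ m).trace
      = (c ^ m) • ((∑ i, g i ω • H i) ^ m).trace := by
    intro m ω; rw [smul_pow, trace_smul, hAeq ω]
  -- LHS
  have hL : ∫ ω, ((c • A ω) ^ (q+1)).trace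
      = (c ^ (q+1)) • ∑ f : Fin (q+1) → ι, (∏ i, gmom (cnt f i)) • (wrd H f).trace := by
    calc ∫ ω, ((c • A ω) ^ (q+1)).trace
        = ∫ ω, (c ^ (q+1)) • ((∑ i, g i ω • H i) ^ (q+1)).trace := by
          congr 1; funext ω; exact hsc (q+1) ω
      _ = (c ^ (q+1)) • ∫ ω, ((∑ i, g i ω • H i) ^ (q+1)).trace := integral_smul _ _
      _ = _ := by rw [integral_trace_pow hgmeas hgind hgmap]
  have hcore := core_identity H gmom gmom_succ hmagic q
  -- RHS summands
  have hR : ∀ k ∈ Finset.range q,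
      ∫ ω, ((c • A ω) ^ k).trace * ((c • A ω) ^ (q - 1 - k)).trace
        = (c ^ (q - 1)) • ∑ u : Fin k → ι, ∑ v : Fin (q-1-k) → ι,
            (∏ i, gmom (cnt u i + cnt v i)) • ((wrd H u).trace * (wrd H v).trace) := by
    intro k hk
    have hkp : k + (q - 1 - k) = q - 1 := by
      have := Finset.mem_range.1 hk; omega
    calc ∫ ω, ((c • A ω) ^ k).trace * ((c • A ω) ^ (q - 1 - k)).trace
        = ∫ ω, (c ^ (q-1)) • (((∑ i, g i ω • H i) ^ k).trace
            * ((∑ i, g i ω • H i) ^ (q - 1 - k)).trace) := by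
          congr 1; funext ω
          rw [hsc k ω, hsc (q - 1 - k) ω, smul_mul_smul_comm, ← pow_add, hkp]
      _ = (c ^ (q-1)) • ∫ ω, ((∑ i, g i ω • H i) ^ k).trace
            * ((∑ i, g i ω • H i) ^ (q - 1 - k)).trace := integral_smul _ _
      _ = _ := by rw [integral_trace_pow_mul hgmeas hgind hgmap]
  -- assemble
  rw [hq1]
  simp only [hq2]
  rw [hL, hcore, Finset.sum_congr rfl hR, Finset.smul_sum, Finset.mul_sum]
  refine Finset.sum_congr rfl fun k hk => ?_
  have hqk : q + 1 = 2 + (q - 1) := by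
    have := Finset.mem_range.1 hk; omega
  rw [hqk, pow_add, hc2, mul_smul, Complex.real_smul]
  congr 1
  push_cast
  ring
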